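/- In the clique cover instance setting, the truncation projection P : { x ∈ ℝ^{n+m} : x ≥ 0 } → C — defined by: initialize x̂_i := 0 for i ∈ {1,…,n} and x̂_{n+j} := 1 for j ∈ {1,…,m}; then for i = 1,…,n in order set M := min_{j∈J_i} x̂_{n+j}, x̂_i := min(x_i, M), and subtract x̂_i from x̂_{n+j} for each j ∈ J_i; output P(x) := x̂ — is a continuous map. Together with its idempotence on C, this makes P a projection onto the feasible set C. -/

import Mathlib

/-- the truncation projection, as a map from the non-negative
orthant, is continuous; together with mapping into the feasible set `C` and
being the identity on `C`, it is a projection onto `C`. Here `xh x k` is the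
state of the algorithm on input `x` after processing the nodes `0,…,k-1`, and
`Pmap x = xh x n` is its output. -/
theorem stmt_16 (n m : ℕ) (hn : 0 < n) (hm : 0 < m)
    (K : Fin m → Finset (Fin (n + m)))
    (hKsmall : ∀ j, ∀ i ∈ K j, (i : ℕ) < n)
    (Kbar : Fin m → Finset (Fin (n + m)))
    (hKbar : ∀ j, Kbar j = insert (Fin.natAdd n j) (K j))
    (hJne : ∀ i : Fin (n + m), (i : ℕ) < n →
      (Finset.univ.filter (fun j => i ∈ Kbar j)).Nonempty)
    (xh : (Fin (n + m) → ℝ) → ℕ → Fin (n + m) → ℝ)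
    (h0 : ∀ (x : Fin (n + m) → ℝ) (i : Fin (n + m)),
      xh x 0 i = if (i : ℕ) < n then 0 else 1)
    (hstep1 : ∀ (x : Fin (n + m) → ℝ) (k : ℕ) (hk : k < n)
        (ik : Fin (n + m)) (hik : (ik : ℕ) = k),
      ∀ i : Fin (n + m), (i : ℕ) < n →
        xh x (k + 1) i =
          if i = ik then
            min (x ik)
              ((Finset.univ.filter (fun j => ik ∈ Kbar j)).inf'
                (hJne ik (by rw [hik]; exact hk))
                (fun j => xh x k (Fin.natAdd n j)))
          else xh x k i)
    (hstep2 : ∀ (x : Fin (n + m) → ℝ) (k : ℕ) (hk : k < n)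
        (ik : Fin (n + m)) (hik : (ik : ℕ) = k),
      ∀ j : Fin m,
        xh x (k + 1) (Fin.natAdd n j) =
          if ik ∈ Kbar j then
            xh x k (Fin.natAdd n j) -
              min (x ik)
                ((Finset.univ.filter (fun j' => ik ∈ Kbar j')).inf'
                  (hJne ik (by rw [hik]; exact hk))
                  (fun j' => xh x k (Fin.natAdd n j')))
          else xh x k (Fin.natAdd n j))
    (Pmap : (Fin (n + m) → ℝ) → Fin (n + m) → ℝ)
    (hP : ∀ x, Pmap x = xh x n) :
    ContinuousOn Pmap {x | ∀ i, 0 ≤ x i} ∧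
    (∀ x, (∀ i, 0 ≤ x i) →
      (∀ i, 0 ≤ Pmap x i ∧ Pmap x i ≤ 1) ∧ ∀ j, ∑ i ∈ Kbar j, Pmap x i = 1) ∧
    (∀ x, (∀ i, 0 ≤ x i ∧ x i ≤ 1) → (∀ j, ∑ i ∈ Kbar j, x i = 1) → Pmap x = x) := by
  -- basic facts
  have hnatval : ∀ j : Fin m, (Fin.natAdd n j : ℕ) = n + (j : ℕ) := fun j => rfl
  have hnotK : ∀ j j' : Fin m, Fin.natAdd n j ∉ K j' := by
    intro j j' h
    have := hKsmall j' _ h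
    rw [hnatval] at this
    omega
  have hnat : ∀ i : Fin (n + m), n ≤ (i : ℕ) → ∃ j : Fin m, i = Fin.natAdd n j := by
    intro i hi
    refine ⟨⟨(i : ℕ) - n, by omega⟩, ?_⟩
    apply Fin.ext
    rw [hnatval]
    simp
    omega
  have hmemK : ∀ (j : Fin m) (i : Fin (n + m)), (i : ℕ) < n → i ∈ Kbar j → i ∈ K j := by
    intro j i hi hmem
    rw [hKbar] at hmem
    rcases Finset.mem_insert.mp hmem with h | h
    · exfalso; rw [h, hnatval] at hi; omega
    · exact h
  -- continuity of each step
  have hcont : ∀ k, k ≤ n → ∀ i, Continuous fun x => xh x k i := by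
    intro k
    induction k with
    | zero =>
      intro _ i
      have : (fun x => xh x 0 i) = fun _ => if (i : ℕ) < n then (0 : ℝ) else 1 :=
        funext fun x => h0 x i
      rw [this]; exact continuous_const
    | succ k ih =>
      intro hk i
      have hkn : k < n := hk
      have ihk := ih hkn.le
      set ik : Fin (n + m) := ⟨k, by omega⟩ with hikd
      have hcmin : Continuous fun x => min (x ik)
          ((Finset.univ.filter (fun j => ik ∈ Kbar j)).inf'
            (hJne ik hkn) (fun j => xh x k (Fin.natAdd n j))) := by
        apply Continuous.min (continuous_apply ik)
        exact Continuous.finset_inf'_apply _ (fun j _ => ihk (Fin.natAdd n j))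
      by_cases hi : (i : ℕ) < n
      · have heq : (fun x => xh x (k + 1) i) = fun x =>
            if i = ik then min (x ik)
              ((Finset.univ.filter (fun j => ik ∈ Kbar j)).inf'
                (hJne ik hkn) (fun j => xh x k (Fin.natAdd n j)))
            else xh x k i := funext fun x => hstep1 x k hkn ik rfl i hi
        rw [heq]
        by_cases h : i = ik
        · simpa [h] using hcmin
        · simpa [h] using ihk i
      · obtain ⟨j, rfl⟩ := hnat i (le_of_not_gt hi)
        have heq : (fun x => xh x (k + 1) (Fin.natAdd n j)) = fun x =>
            if ik ∈ Kbar j then xh x k (Fin.natAdd n j) -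
              min (x ik)
                ((Finset.univ.filter (fun j' => ik ∈ Kbar j')).inf'
                  (hJne ik hkn) (fun j' => xh x k (Fin.natAdd n j')))
            else xh x k (Fin.natAdd n j) := funext fun x => hstep2 x k hkn ik rfl j
        rw [heq]
        by_cases h : ik ∈ Kbar j
        · simp only [h, if_true]; exact (ihk (Fin.natAdd n j)).sub hcmin
        · simpa [h] using ihk (Fin.natAdd n j)
  -- invariant for part 2
  have hinvB : ∀ (x : Fin (n + m) → ℝ), (∀ i, 0 ≤ x i) → ∀ k, k ≤ n →
      (∀ i, 0 ≤ xh x k i ∧ xh x k i ≤ 1) ∧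
      (∀ i : Fin (n + m), (i : ℕ) < n → k ≤ (i : ℕ) → xh x k i = 0) ∧
      (∀ j, ∑ i ∈ Kbar j, xh x k i = 1) := by
    intro x hx k
    induction k with
    | zero =>
      intro _
      refine ⟨?_, ?_, ?_⟩
      · intro i; rw [h0]; split <;> norm_num
      · intro i hi _; rw [h0, if_pos hi]
      · intro j
        rw [hKbar, Finset.sum_insert (hnotK j j)]
        have h1 : xh x 0 (Fin.natAdd n j) = 1 := by
          rw [h0, if_neg]; rw [hnatval]; omega
        have h2 : ∑ i ∈ K j, xh x 0 i = 0 :=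
          Finset.sum_eq_zero fun i hi => by rw [h0, if_pos (hKsmall j i hi)]
        rw [h1, h2]; ring
    | succ k ih =>
      intro hk1
      have hkn : k < n := hk1
      obtain ⟨ihb, ihz, ihs⟩ := ih hkn.le
      set ik : Fin (n + m) := ⟨k, by omega⟩ with hikd
      set M : ℝ := (Finset.univ.filter (fun j => ik ∈ Kbar j)).inf'
        (hJne ik hkn) (fun j => xh x k (Fin.natAdd n j)) with hMdef
      set t : ℝ := min (x ik) M with htdef
      have e1 : ∀ i : Fin (n + m), (i : ℕ) < n →
          xh x (k + 1) i = if i = ik then t else xh x k i :=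
        fun i hi => hstep1 x k hkn ik rfl i hi
      have e2 : ∀ j, xh x (k + 1) (Fin.natAdd n j) =
          if ik ∈ Kbar j then xh x k (Fin.natAdd n j) - t else xh x k (Fin.natAdd n j) :=
        fun j => hstep2 x k hkn ik rfl j
      have hM0 : 0 ≤ M := by
        rw [hMdef]
        apply Finset.le_inf'
        intro j _
        exact (ihb _).1
      have hMle : ∀ j, ik ∈ Kbar j → M ≤ xh x k (Fin.natAdd n j) := by
        intro j hj
        rw [hMdef]
        exact Finset.inf'_le _ (by simp [hj])
      have hM1 : M ≤ 1 := by
        obtain ⟨j0, hj0⟩ := hJne ik hkn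
        have := hMle j0 (Finset.mem_filter.mp hj0).2
        exact this.trans (ihb (Fin.natAdd n j0)).2
      have ht0 : 0 ≤ t := le_min (hx ik) hM0
      have ht1 : t ≤ 1 := (min_le_right _ _).trans hM1
      refine ⟨?_, ?_, ?_⟩
      · intro i
        by_cases hi : (i : ℕ) < n
        · rw [e1 i hi]
          split_ifs with h
          · exact ⟨ht0, ht1⟩
          · exact ihb i
        · obtain ⟨j, rfl⟩ := hnat i (le_of_not_gt hi)
          rw [e2 j]
          split_ifs with h
          · constructor
            · have := hMle j h
              have := min_le_right (x ik) M
              rw [← htdef] at this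
              linarith
            · have := (ihb (Fin.natAdd n j)).2
              linarith
          · exact ihb _
      · intro i hi hki
        rw [e1 i hi, if_neg]
        · exact ihz i hi (by omega)
        · intro h
          rw [h] at hki
          simp [hikd] at hki
      · intro j
        have hold := ihs j
        rw [hKbar, Finset.sum_insert (hnotK j j)] at hold ⊢
        rw [e2 j]
        have hcl : ∑ i ∈ K j, xh x (k + 1) i = ∑ i ∈ K j, (if i = ik then t else xh x k i) :=
          Finset.sum_congr rfl fun i hi => e1 i (hKsmall j i hi)
        by_cases h : ik ∈ Kbar j
        · have hikK : ik ∈ K j := hmemK j ik hkn h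
          have hz : xh x k ik = 0 := ihz ik hkn le_rfl
          have hnew : ∑ i ∈ K j, (if i = ik then t else xh x k i) =
              t + ∑ i ∈ (K j).erase ik, xh x k i := by
            rw [← Finset.add_sum_erase _ _ hikK, if_pos rfl]
            congr 1
            exact Finset.sum_congr rfl fun i hi => if_neg (Finset.mem_erase.mp hi).1
          have holdcl : ∑ i ∈ K j, xh x k i = xh x k ik + ∑ i ∈ (K j).erase ik, xh x k i :=
            (Finset.add_sum_erase _ _ hikK).symm
          rw [hcl, hnew, if_pos h]
          rw [holdcl, hz] at hold
          linarith
        · have hikK : ik ∉ K j := fun hK => h (by rw [hKbar]; exact Finset.mem_insert_of_mem hK)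
          have hnew : ∑ i ∈ K j, (if i = ik then t else xh x k i) = ∑ i ∈ K j, xh x k i :=
            Finset.sum_congr rfl fun i hi => if_neg (fun he => hikK (by rw [← he]; exact hi))
          rw [hcl, hnew, if_neg h]
          exact hold
  -- invariant for part 3
  have hinvC : ∀ (x : Fin (n + m) → ℝ), (∀ i, 0 ≤ x i ∧ x i ≤ 1) →
      (∀ j, ∑ i ∈ Kbar j, x i = 1) → ∀ k, k ≤ n →
      (∀ i : Fin (n + m), (i : ℕ) < n →
        ((i : ℕ) < k → xh x k i = x i) ∧ (k ≤ (i : ℕ) → xh x k i = 0)) ∧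
      (∀ j, xh x k (Fin.natAdd n j) =
        x (Fin.natAdd n j) + ∑ i ∈ (K j).filter (fun i : Fin (n + m) => k ≤ (i : ℕ)), x i) := by
    intro x hx hsum k
    induction k with
    | zero =>
      intro _
      constructor
      · intro i hi
        exact ⟨fun h => absurd h (by omega), fun _ => by rw [h0, if_pos hi]⟩
      · intro j
        have h1 : xh x 0 (Fin.natAdd n j) = 1 := by
          rw [h0, if_neg]; rw [hnatval]; omega
        have hfil : (K j).filter (fun i : Fin (n + m) => 0 ≤ (i : ℕ)) = K j :=
          Finset.filter_true_of_mem fun _ _ => Nat.zero_le _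
        have := hsum j
        rw [hKbar, Finset.sum_insert (hnotK j j)] at this
        rw [h1, hfil]
        linarith
    | succ k ih =>
      intro hk1
      have hkn : k < n := hk1
      obtain ⟨ihy, ihs⟩ := ih hkn.le
      set ik : Fin (n + m) := ⟨k, by omega⟩ with hikd
      set M : ℝ := (Finset.univ.filter (fun j => ik ∈ Kbar j)).inf'
        (hJne ik hkn) (fun j => xh x k (Fin.natAdd n j)) with hMdef
      set t : ℝ := min (x ik) M with htdef
      have e1 : ∀ i : Fin (n + m), (i : ℕ) < n →
          xh x (k + 1) i = if i = ik then t else xh x k i :=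
        fun i hi => hstep1 x k hkn ik rfl i hi
      have e2 : ∀ j, xh x (k + 1) (Fin.natAdd n j) =
          if ik ∈ Kbar j then xh x k (Fin.natAdd n j) - t else xh x k (Fin.natAdd n j) :=
        fun j => hstep2 x k hkn ik rfl j
      have hxik : x ik ≤ M := by
        rw [hMdef]
        apply Finset.le_inf'
        intro j hj
        have hj' : ik ∈ Kbar j := (Finset.mem_filter.mp hj).2
        have hikK : ik ∈ K j := hmemK j ik hkn hj'
        rw [ihs j]
        have hikfil : ik ∈ (K j).filter (fun i : Fin (n + m) => k ≤ (i : ℕ)) :=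
          Finset.mem_filter.mpr ⟨hikK, le_refl k⟩
        have hle : x ik ≤ ∑ i ∈ (K j).filter (fun i : Fin (n + m) => k ≤ (i : ℕ)), x i :=
          Finset.single_le_sum (fun i _ => (hx i).1) hikfil
        have := (hx (Fin.natAdd n j)).1
        linarith
      have ht : t = x ik := min_eq_left hxik
      constructor
      · intro i hi
        constructor
        · intro hik1
          rw [e1 i hi]
          by_cases h : i = ik
          · rw [if_pos h, ht, h]
          · rw [if_neg h]
            refine (ihy i hi).1 ?_
            have : (i : ℕ) ≠ k := fun hc => h (Fin.ext (show (i : ℕ) = (ik : ℕ) from hc))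
            omega
        · intro hge
          rw [e1 i hi, if_neg (fun h => by rw [h] at hge; simp [hikd] at hge)]
          exact (ihy i hi).2 (by omega)
      · intro j
        rw [e2 j, ihs j]
        by_cases h : ik ∈ Kbar j
        · have hikK : ik ∈ K j := hmemK j ik hkn h
          have hfil : (K j).filter (fun i : Fin (n + m) => k ≤ (i : ℕ)) =
              insert ik ((K j).filter (fun i : Fin (n + m) => k + 1 ≤ (i : ℕ))) := by
            ext i
            simp only [Finset.mem_filter, Finset.mem_insert]
            constructor
            · rintro ⟨hiK, hki⟩
              by_cases hc : (i : ℕ) = k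
              · exact Or.inl (Fin.ext hc)
              · exact Or.inr ⟨hiK, by omega⟩
            · rintro (rfl | ⟨hiK, hki⟩)
              · exact ⟨hikK, le_refl k⟩
              · exact ⟨hiK, by omega⟩
          have hnotmem : ik ∉ (K j).filter (fun i : Fin (n + m) => k + 1 ≤ (i : ℕ)) := by
            simp [Finset.mem_filter, hikd]
          rw [if_pos h, hfil, Finset.sum_insert hnotmem, ht]
          ring
        · have hikK : ik ∉ K j := fun hK => h (by rw [hKbar]; exact Finset.mem_insert_of_mem hK)
          have hfil : (K j).filter (fun i : Fin (n + m) => k ≤ (i : ℕ)) =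
              (K j).filter (fun i : Fin (n + m) => k + 1 ≤ (i : ℕ)) := by
            apply Finset.filter_congr
            intro i hiK
            have : (i : ℕ) ≠ k := fun hc => hikK (by rw [show i = ik from Fin.ext (show (i : ℕ) = (ik : ℕ) from hc)] at hiK; exact hiK)
            omega
          rw [if_neg h, hfil]
  refine ⟨?_, ?_, ?_⟩
  · have hPc : Continuous Pmap := by
      have : Pmap = fun x => xh x n := funext hP
      rw [this]
      exact continuous_pi fun i => hcont n le_rfl i
    exact hPc.continuousOn
  · intro x hx
    obtain ⟨hb, _, hs⟩ := hinvB x hx n le_rfl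
    refine ⟨fun i => by rw [hP]; exact hb i, fun j => ?_⟩
    simp only [hP]
    exact hs j
  · intro x hx hsum
    obtain ⟨hy, hs⟩ := hinvC x hx hsum n le_rfl
    funext i
    rw [hP]
    by_cases hi : (i : ℕ) < n
    · exact (hy i hi).1 hi
    · obtain ⟨j, rfl⟩ := hnat i (le_of_not_gt hi)
      rw [hs j]
      have hfil : (K j).filter (fun i : Fin (n + m) => n ≤ (i : ℕ)) = ∅ :=
        Finset.filter_false_of_mem fun i hi => by have := hKsmall j i hi; omega
      rw [hfil, Finset.sum_empty, add_zero]
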